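/- For every δ ∈ ℝ^{J−1} and every j ∈ {1,…,J−1}, the row sum of partial derivatives satisfies Σ_{l=1}^{J−1} ∂T_j/∂δ_l(δ) = 1 − (1/ms*_j(δ)) · Σ_{k=1}^K d_k 𝒫^k_j(δ) 𝒫^k_J(δ), and this quantity is strictly less than 1. -/

import Mathlib

/-- Row-sum step in the proof of Lemma 2 (condition 1 of the BLP contraction
theorem): for every `δ` and every inside good `j`, the partial derivatives of `T_j`
exist, their sum over `l = 1,…,J-1` equals
`1 - (1/ms*_j(δ)) · Σ_k d_k 𝒫^k_j(δ) 𝒫^k_J(δ)`, and this quantity is `< 1`. -/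
theorem stmt_3
    (n K : ℕ) (hn : 1 ≤ n) (hK : 1 ≤ K)
    (d : Fin K → ℝ) (hd0 : ∀ k, 0 ≤ d k) (hd1 : ∑ k, d k = 1)
    (P : Fin K → Fin (n + 1) → ℝ)
    (hP0 : ∀ k j, 0 < P k j) (hP1 : ∀ k, ∑ j, P k j = 1)
    (u : Fin (n + 1) → Fin K → ℝ) (hu : ∀ k, u (Fin.last n) k = 0)
    (ms : Fin (n + 1) → ℝ) (hms0 : ∀ j, 0 < ms j) (hms1 : ∑ j, ms j = 1)
    (Pcond : (Fin n → ℝ) → Fin K → Fin (n + 1) → ℝ)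
    (hPcond : ∀ δ k j, Pcond δ k j =
      P k j * Real.exp ((Fin.snoc δ 0 : Fin (n + 1) → ℝ) j + u j k) /
        ∑ l, P k l * Real.exp ((Fin.snoc δ 0 : Fin (n + 1) → ℝ) l + u l k))
    (msStar : (Fin n → ℝ) → Fin (n + 1) → ℝ)
    (hmsStar : ∀ δ j, msStar δ j = ∑ k, d k * Pcond δ k j)
    (T : (Fin n → ℝ) → Fin n → ℝ)
    (hT : ∀ δ j, T δ j = δ j + Real.log (ms j.castSucc) - Real.log (msStar δ j.castSucc)) :
    ∀ (δ : Fin n → ℝ) (j : Fin n),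
      (∀ l : Fin n, DifferentiableAt ℝ (fun t : ℝ => T (Function.update δ l t) j) (δ l)) ∧
      (∑ l : Fin n, deriv (fun t : ℝ => T (Function.update δ l t) j) (δ l)) =
        1 - (1 / msStar δ j.castSucc) *
          ∑ k, d k * Pcond δ k j.castSucc * Pcond δ k (Fin.last n) ∧
      1 - (1 / msStar δ j.castSucc) *
          ∑ k, d k * Pcond δ k j.castSucc * Pcond δ k (Fin.last n) < 1 := by
  -- generic positivity of denominators
  have hden : ∀ (ε : Fin n → ℝ) (k : Fin K),
      0 < ∑ l, P k l * Real.exp ((Fin.snoc ε 0 : Fin (n + 1) → ℝ) l + u l k) := by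
    intro ε k
    apply Finset.sum_pos
    · intro i _
      exact mul_pos (hP0 k i) (Real.exp_pos _)
    · exact Finset.univ_nonempty
  have hPc_pos : ∀ (ε : Fin n → ℝ) (k : Fin K) (j' : Fin (n + 1)), 0 < Pcond ε k j' := by
    intro ε k j'
    rw [hPcond]
    exact div_pos (mul_pos (hP0 k j') (Real.exp_pos _)) (hden ε k)
  have hPc_sum : ∀ (ε : Fin n → ℝ) (k : Fin K), ∑ j', Pcond ε k j' = 1 := by
    intro ε k
    simp only [hPcond]
    rw [← Finset.sum_div, div_self (ne_of_gt (hden ε k))]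
  -- some d k is positive
  obtain ⟨k₀, -, hk₀⟩ : ∃ k ∈ Finset.univ, 0 < d k := by
    by_contra h
    push_neg at h
    have : ∑ k, d k ≤ 0 := Finset.sum_nonpos (fun k hk => h k hk)
    linarith [hd1]
  have hms_pos : ∀ (ε : Fin n → ℝ) (j' : Fin (n + 1)), 0 < msStar ε j' := by
    intro ε j'
    rw [hmsStar]
    apply Finset.sum_pos' (fun k _ => mul_nonneg (hd0 k) (le_of_lt (hPc_pos ε k _)))
    exact ⟨k₀, Finset.mem_univ _, mul_pos hk₀ (hPc_pos ε k₀ _)⟩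
  intro δ j
  set δ' : Fin (n + 1) → ℝ := Fin.snoc δ 0 with hδ'
  -- key derivative for each l
  have key : ∀ l : Fin n, HasDerivAt (fun t => T (Function.update δ l t) j)
      ((if j = l then (1:ℝ) else 0) -
        (∑ k, d k * (Pcond δ k j.castSucc *
          ((if j = l then (1:ℝ) else 0) - Pcond δ k l.castSucc))) / msStar δ j.castSucc)
      (δ l) := by
    intro l
    -- elementary term derivative
    have hE : ∀ (k : Fin K) (m : Fin (n + 1)), HasDerivAt
        (fun t => P k m * Real.exp (Function.update δ' l.castSucc t m + u m k))
        (if m = l.castSucc then P k m * Real.exp (δ' m + u m k) else 0) (δ l) := by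
      intro k m
      by_cases hm : m = l.castSucc
      · subst hm
        simp only [Function.update_self, if_pos rfl]
        have : HasDerivAt (fun t : ℝ => P k (l.castSucc) * Real.exp (t + u (l.castSucc) k))
            (P k (l.castSucc) * (Real.exp (δ l + u (l.castSucc) k) * 1)) (δ l) :=
          (((hasDerivAt_id (δ l)).add_const _).exp).const_mul _
        convert this using 1
        simp [hδ', Fin.snoc_castSucc]
      · simp only [Function.update_of_ne hm, if_neg hm]
        exact hasDerivAt_const _ _
    -- denominator derivative
    have hD : ∀ k : Fin K, HasDerivAt
        (fun t => ∑ m, P k m * Real.exp (Function.update δ' l.castSucc t m + u m k))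
        (P k l.castSucc * Real.exp (δ' l.castSucc + u l.castSucc k)) (δ l) := by
      intro k
      have := HasDerivAt.fun_sum (fun m (_ : m ∈ Finset.univ) => hE k m)
      refine this.congr_deriv (Eq.symm ?_)
      rw [Finset.sum_ite_eq' Finset.univ l.castSucc
        (fun m => P k m * Real.exp (δ' m + u m k))]
      simp
    -- Pcond derivative
    have hQ : ∀ k : Fin K, HasDerivAt
        (fun t => Pcond (Function.update δ l t) k j.castSucc)
        (Pcond δ k j.castSucc * ((if j = l then (1:ℝ) else 0) - Pcond δ k l.castSucc))
        (δ l) := by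
      intro k
      have hsnoc : ∀ t : ℝ, (Fin.snoc (Function.update δ l t) 0 : Fin (n + 1) → ℝ) =
          Function.update δ' l.castSucc t := by
        intro t
        rw [hδ', Fin.snoc_update]
      have hrw : ∀ t, Pcond (Function.update δ l t) k j.castSucc =
          (P k j.castSucc * Real.exp (Function.update δ' l.castSucc t j.castSucc + u j.castSucc k)) /
          ∑ m, P k m * Real.exp (Function.update δ' l.castSucc t m + u m k) := by
        intro t
        rw [hPcond, hsnoc]
      have hupd : Function.update δ' l.castSucc (δ l) = δ' := by
        have h : δ' l.castSucc = δ l := by simp [hδ']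
        rw [← h, Function.update_eq_self]
      have hD0 : (∑ m, P k m * Real.exp (δ' m + u m k)) ≠ 0 := ne_of_gt (hden δ k)
      have hD0' : (∑ m, P k m * Real.exp (Function.update δ' l.castSucc (δ l) m + u m k)) ≠ 0 := by
        rw [hupd]; exact hD0
      have hdiv := (hE k j.castSucc).fun_div (hD k) hD0'
      rw [hupd] at hdiv
      simp only [hrw]
      refine hdiv.congr_deriv (Eq.symm ?_)
      rw [hPcond, hPcond]
      simp only [← hδ']
      by_cases h : j = l
      · rw [if_pos h, if_pos (by rw [h])]
        subst h
        field_simp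
      · rw [if_neg h, if_neg (fun hc => h (Fin.castSucc_inj.mp hc))]
        field_simp
        ring
    -- msStar derivative
    have hM : HasDerivAt (fun t => msStar (Function.update δ l t) j.castSucc)
        (∑ k, d k * (Pcond δ k j.castSucc *
          ((if j = l then (1:ℝ) else 0) - Pcond δ k l.castSucc))) (δ l) := by
      have hrw : ∀ t, msStar (Function.update δ l t) j.castSucc =
          ∑ k, d k * Pcond (Function.update δ l t) k j.castSucc := fun t => hmsStar _ _
      simp only [hrw]
      exact HasDerivAt.fun_sum (fun k _ => (hQ k).const_mul (d k))
    -- the coordinate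
    have hcoord : HasDerivAt (fun t => Function.update δ l t j)
        (if j = l then (1:ℝ) else 0) (δ l) := by
      by_cases h : j = l
      · subst h
        simp only [Function.update_self, if_pos rfl]
        exact hasDerivAt_id _
      · simp only [Function.update_of_ne h, if_neg h]
        exact hasDerivAt_const _ _
    have hlog : HasDerivAt (fun t => Real.log (msStar (Function.update δ l t) j.castSucc))
        ((∑ k, d k * (Pcond δ k j.castSucc *
          ((if j = l then (1:ℝ) else 0) - Pcond δ k l.castSucc))) / msStar δ j.castSucc)
        (δ l) := by
      have h0 : msStar (Function.update δ l (δ l)) j.castSucc ≠ 0 :=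
        ne_of_gt (hms_pos _ _)
      have := hM.log h0
      convert this using 2 <;> rw [Function.update_eq_self]
    have hrwT : ∀ t, T (Function.update δ l t) j =
        Function.update δ l t j + Real.log (ms j.castSucc)
          - Real.log (msStar (Function.update δ l t) j.castSucc) := fun t => hT _ _
    simp only [hrwT]
    exact (hcoord.add_const _).sub hlog
  refine ⟨fun l => (key l).differentiableAt, ?_, ?_⟩
  · have hderiv : ∀ l : Fin n, deriv (fun t : ℝ => T (Function.update δ l t) j) (δ l) =
        (if j = l then (1:ℝ) else 0) -
        (∑ k, d k * (Pcond δ k j.castSucc *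
          ((if j = l then (1:ℝ) else 0) - Pcond δ k l.castSucc))) / msStar δ j.castSucc :=
      fun l => (key l).deriv
    simp only [hderiv]
    rw [Finset.sum_sub_distrib]
    have h1 : (∑ l : Fin n, if j = l then (1:ℝ) else 0) = 1 := by
      rw [Finset.sum_ite_eq Finset.univ j (fun _ => (1:ℝ))]
      simp
    rw [h1]
    have h2 : ∀ k, (∑ l : Fin n, Pcond δ k l.castSucc) = 1 - Pcond δ k (Fin.last n) := by
      intro k
      have := hPc_sum δ k
      rw [Fin.sum_univ_castSucc] at this
      linarith
    have h3 : (∑ l : Fin n, (∑ k, d k * (Pcond δ k j.castSucc *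
          ((if j = l then (1:ℝ) else 0) - Pcond δ k l.castSucc))) / msStar δ j.castSucc)
        = (∑ k, d k * Pcond δ k j.castSucc * Pcond δ k (Fin.last n)) / msStar δ j.castSucc := by
      rw [← Finset.sum_div]
      congr 1
      rw [Finset.sum_comm]
      apply Finset.sum_congr rfl
      intro k _
      rw [← Finset.mul_sum]
      have : (∑ l : Fin n, Pcond δ k j.castSucc *
          ((if j = l then (1:ℝ) else 0) - Pcond δ k l.castSucc))
          = Pcond δ k j.castSucc * ((∑ l : Fin n, if j = l then (1:ℝ) else 0)
            - ∑ l : Fin n, Pcond δ k l.castSucc) := by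
        rw [← Finset.mul_sum, Finset.sum_sub_distrib]
      rw [this, h1, h2 k]
      ring
    rw [h3]
    ring
  · have hpos : 0 < (∑ k, d k * Pcond δ k j.castSucc * Pcond δ k (Fin.last n)) := by
      apply Finset.sum_pos'
      · intro k _
        exact mul_nonneg (mul_nonneg (hd0 k) (le_of_lt (hPc_pos δ k _))) (le_of_lt (hPc_pos δ k _))
      · exact ⟨k₀, Finset.mem_univ _,
          mul_pos (mul_pos hk₀ (hPc_pos δ k₀ _)) (hPc_pos δ k₀ _)⟩
    have := mul_pos (div_pos one_pos (hms_pos δ j.castSucc)) hpos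
    linarith
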